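/- Let 𝒰^{(t)} = {(S_γ φ)|_{J_t^S ∪ L_t^S} : φ ∈ ker T₁^{(t)}} be the space of localized potentials, viewed as a subspace of ℝ^{L_t^S ∪ J_t^S}. For each p ∈ D ∪ ∂D define v_p ∈ ℝ^{D ∪ ∂D} by (v_p)_q = γ_{pq} for q ∈ N(p), (v_p)_p = −Σ_{r∈N(p)} γ_{pr}, and 0 otherwise. Then for d−1 ≤ t ≤ dn−1 one has the orthogonal direct-sum decomposition 𝒰^{(t)} ⊕ span{ v_p|_{L_t^S ∪ J_t^S} : p ∈ L_{t+1}^S } = ℝ^{L_t^S ∪ J_t^S}. -/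

import Mathlib

noncomputable section
open Classical Finset

namespace DiscreteCalderon

/-- Vertices of the ambient lattice `ℤ^d`. -/
abbrev V (d : ℕ) := Fin d → ℤ

/-- Interior vertex set `D = {x : 1 ≤ x_i ≤ n}`. -/
def Dset (d n : ℕ) : Set (V d) := {x | ∀ i, 1 ≤ x i ∧ x i ≤ (n : ℤ)}

/-- ℓ¹ distance. -/
def dist1 {d : ℕ} (p q : V d) : ℤ := ∑ i, |p i - q i|

/-- Boundary vertex set `∂D`: vertices at ℓ¹ distance 1 from `D`. -/
def Bset (d n : ℕ) : Set (V d) := {p | p ∉ Dset d n ∧ ∃ q ∈ Dset d n, dist1 p q = 1}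

/-- All vertices of the graph, `D ∪ ∂D`. -/
def Vset (d n : ℕ) : Set (V d) := Dset d n ∪ Bset d n

/-- Adjacency of the lattice graph: ℓ¹ distance 1, both endpoints vertices,
not both on the boundary. -/
def Adj (d n : ℕ) (p q : V d) : Prop :=
  dist1 p q = 1 ∧ p ∈ Vset d n ∧ q ∈ Vset d n ∧ (p ∈ Dset d n ∨ q ∈ Dset d n)

/-- A finite box containing all vertices. -/
def box (d n : ℕ) : Finset (V d) :=
  Fintype.piFinset (fun _ : Fin d => Finset.Icc (0 : ℤ) ((n : ℤ) + 1))

/-- Neighbours of `p` in the graph, as a finite set. -/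
def nbr (d n : ℕ) (p : V d) : Finset (V d) := (box d n).filter (fun q => Adj d n p q)

/-- Interior neighbours of `p`. -/
def nbrD (d n : ℕ) (p : V d) : Finset (V d) := (nbr d n p).filter (fun q => q ∈ Dset d n)

/-- The discrete (weighted) Laplacian `(Δ_γ u)_p = ∑_{q∈N(p)} γ_{qp}(u_q - u_p)`. -/
def lap (d n : ℕ) (γ : V d → V d → ℝ) (u : V d → ℝ) (p : V d) : ℝ :=
  ∑ q ∈ nbr d n p, γ q p * (u q - u p)

/-- The boundary current `(D_γ u)_p = ∑_{q∈N(p)∩D} γ_{pq}(u_q - u_p)`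
(there is exactly one interior neighbour of a boundary node). -/
def cur (d n : ℕ) (γ : V d → V d → ℝ) (u : V d → ℝ) (p : V d) : ℝ :=
  ∑ q ∈ nbrD d n p, γ p q * (u q - u p)

/-- A strictly positive symmetric conductivity. -/
def GoodCond (d n : ℕ) (γ : V d → V d → ℝ) : Prop :=
  (∀ p q, γ p q = γ q p) ∧ ∀ p q, Adj d n p q → 0 < γ p q

/-- The coordinate sum of a lattice point. -/
def sum1 {d : ℕ} (x : V d) : ℤ := ∑ i, x i

/-- Interior diagonal slice `L_t`. -/
def L (d n : ℕ) (t : ℤ) : Set (V d) := {x | x ∈ Dset d n ∧ sum1 x = t}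

/-- `L_t^S = ∪_{ℓ ≤ t} L_ℓ`. -/
def LS (d n : ℕ) (t : ℤ) : Set (V d) := {x | x ∈ Dset d n ∧ sum1 x ≤ t}

/-- Boundary diagonal slice `K_t`. -/
def K (d n : ℕ) (t : ℤ) : Set (V d) := {x | x ∈ Bset d n ∧ sum1 x = t}

/-- `K_t^- = {x ∈ K_t : min_i x_i = 0}`. -/
def Km (d n : ℕ) (t : ℤ) : Set (V d) := {x | x ∈ K d n t ∧ ∃ i, x i = 0}

/-- `K_t^+ = {x ∈ K_t : max_i x_i = n+1}`. -/
def Kp (d n : ℕ) (t : ℤ) : Set (V d) := {x | x ∈ K d n t ∧ ∃ i, x i = (n : ℤ) + 1}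

/-- `K_t^{S-} = ∪_{ℓ ≤ t} K_ℓ^-`. -/
def KSm (d n : ℕ) (t : ℤ) : Set (V d) := {x | x ∈ Bset d n ∧ sum1 x ≤ t ∧ ∃ i, x i = 0}

/-- `K_t^{S+} = ∪_{ℓ ≤ t} K_ℓ^+`. -/
def KSp (d n : ℕ) (t : ℤ) : Set (V d) := {x | x ∈ Bset d n ∧ sum1 x ≤ t ∧ ∃ i, x i = (n : ℤ) + 1}

/-- The lower boundary region `J_t^S = K_t^{S-} ∪ K_{t+1}^{S+}`. -/
def JS (d n : ℕ) (t : ℤ) : Set (V d) := KSm d n t ∪ KSp d n (t + 1)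

/-- `J_t = K_t^- ∪ K_{t+1}^+`. -/
def Jslice (d n : ℕ) (t : ℤ) : Set (V d) := Km d n t ∪ Kp d n (t + 1)

/-- `u` is the γ-harmonic extension of boundary data `φ` (zero-extension convention
outside `D ∪ ∂D`). -/
def IsSol (d n : ℕ) (γ : V d → V d → ℝ) (φ u : V d → ℝ) : Prop :=
  (∀ p, p ∉ Vset d n → u p = 0) ∧
  (∀ p ∈ Dset d n, lap d n γ u p = 0) ∧
  (∀ p ∈ Bset d n, u p = φ p)

/-- The Laplacian row vector `v_p`. -/
def vrow (d n : ℕ) (γ : V d → V d → ℝ) (p : V d) : V d → ℝ := fun q =>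
  if Adj d n p q then γ p q
  else if q = p then -(∑ r ∈ nbr d n p, γ p r) else 0

/-- Restriction of a function to a set (zero outside). -/
def rst {d : ℕ} (S : Set (V d)) (f : V d → ℝ) : V d → ℝ := fun q => if q ∈ S then f q else 0

/-- Euclidean inner product of (vertex-supported) functions. -/
def dot (d n : ℕ) (f g : V d → ℝ) : ℝ := ∑ p ∈ box d n, f p * g p

/-- The localized solution space `𝒰^{(t)}`: restrictions to `L_t^S ∪ J_t^S` of
harmonic extensions of boundary potentials in `ker T₁^{(t)}`. -/
def Uset (d n : ℕ) (γ : V d → V d → ℝ) (t : ℤ) : Set (V d → ℝ) :=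
  {u | (∀ p, p ∉ LS d n t ∪ JS d n t → u p = 0) ∧
    ∃ φ w : V d → ℝ, (∀ p, p ∉ JS d n t → φ p = 0) ∧ IsSol d n γ φ w ∧
      (∀ p ∈ L d n (t + 1), w p = 0) ∧ ∀ p ∈ LS d n t ∪ JS d n t, u p = w p}

/-- The set `E_t` of edges between the consecutive layers:
`E(K_t^-, L_{t+1}) ∪ E(L_t, K_{t+1}^+) ∪ E(L_t, L_{t+1})`. -/
def EdgeT (d n : ℕ) (t : ℤ) (p q : V d) : Prop :=
  Adj d n p q ∧
    ((p ∈ Km d n t ∧ q ∈ L d n (t + 1)) ∨ (q ∈ Km d n t ∧ p ∈ L d n (t + 1)) ∨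
     (p ∈ L d n t ∧ q ∈ Kp d n (t + 1)) ∨ (q ∈ L d n t ∧ p ∈ Kp d n (t + 1)) ∨
     (p ∈ L d n t ∧ q ∈ L d n (t + 1)) ∨ (q ∈ L d n t ∧ p ∈ L d n (t + 1)))

/-- The edge vector `J_p^u ∈ ℝ^{E_t}`, `J_p^u(pq) = u_p - u_q` on edges of `E_t`
incident to `p`, and `0` otherwise (as a symmetric function of edge endpoints). -/
def Jvec (d n : ℕ) (t : ℤ) (u : V d → ℝ) (p : V d) : V d → V d → ℝ := fun a b =>
  if EdgeT d n t a b then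
    (if a = p then u a - u b else if b = p then u b - u a else 0)
  else 0

/-- Inner product of edge functions. -/
def dotE (d n : ℕ) (f g : V d → V d → ℝ) : ℝ :=
  ∑ p ∈ box d n, ∑ q ∈ box d n, f p q * g p q

/-! ### Auxiliary lemmas -/

lemma dist1_comm {d : ℕ} (p q : V d) : dist1 p q = dist1 q p :=
  Finset.sum_congr rfl fun i _ => abs_sub_comm _ _

lemma adj_symm {d n : ℕ} {p q : V d} (h : Adj d n p q) : Adj d n q p :=
  ⟨by rw [dist1_comm]; exact h.1, h.2.2.1, h.2.1, h.2.2.2.symm⟩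

lemma not_adj_self {d n : ℕ} (p : V d) : ¬ Adj d n p p := by
  intro h
  have h0 : dist1 p p = 0 := Finset.sum_eq_zero fun i _ => by simp
  rw [h.1] at h0; exact one_ne_zero h0

lemma dist1_struct {d : ℕ} {p q : V d} (h : dist1 p q = 1) :
    ∃ j, (∀ i, i ≠ j → p i = q i) ∧ (p j = q j + 1 ∨ p j = q j - 1) := by
  by_cases hall : ∀ i, p i = q i
  · exfalso
    have h0 : dist1 p q = 0 := Finset.sum_eq_zero fun i _ => by rw [hall i]; simp
    rw [h] at h0; exact one_ne_zero h0
  · push_neg at hall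
    obtain ⟨j, hj⟩ := hall
    have h1 : 1 ≤ |p j - q j| := Int.one_le_abs (by omega)
    have hle : |p j - q j| ≤ dist1 p q :=
      Finset.single_le_sum (f := fun i => |p i - q i|) (fun i _ => abs_nonneg _) (mem_univ j)
    have habs : |p j - q j| = 1 := le_antisymm (h ▸ hle) h1
    have hsplit : |p j - q j| + ∑ i ∈ univ.erase j, |p i - q i| = dist1 p q :=
      Finset.add_sum_erase univ (fun i => |p i - q i|) (mem_univ j)
    have hrest : ∑ i ∈ univ.erase j, |p i - q i| = 0 := by omega
    have hz : ∀ i ∈ univ.erase j, |p i - q i| = 0 :=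
      (Finset.sum_eq_zero_iff_of_nonneg fun i _ => abs_nonneg _).mp hrest
    refine ⟨j, fun i hi => ?_, ?_⟩
    · have := hz i (Finset.mem_erase.mpr ⟨hi, mem_univ i⟩)
      have := abs_eq_zero.mp this; omega
    · rcases abs_eq (by norm_num : (0:ℤ) ≤ 1) |>.mp habs with h' | h' <;> omega

lemma sum1_of_struct {d : ℕ} {p q : V d} {j : Fin d}
    (hj : ∀ i, i ≠ j → p i = q i) : sum1 p - sum1 q = p j - q j := by
  have : sum1 p - sum1 q = ∑ i, (p i - q i) := by
    rw [Finset.sum_sub_distrib]; rfl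
  rw [this, ← Finset.add_sum_erase univ (fun i => p i - q i) (mem_univ j)]
  have : ∑ i ∈ univ.erase j, (p i - q i) = 0 :=
    Finset.sum_eq_zero fun i hi => by
      rw [hj i (Finset.mem_erase.mp hi).1]; ring
  rw [this]; ring

lemma adj_sum1 {d n : ℕ} {p q : V d} (h : Adj d n p q) :
    sum1 q = sum1 p + 1 ∨ sum1 q = sum1 p - 1 := by
  obtain ⟨j, hj, hpm⟩ := dist1_struct h.1
  have := sum1_of_struct hj
  omega

lemma mem_box_of_Vset {d n : ℕ} {p : V d} (h : p ∈ Vset d n) : p ∈ box d n := by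
  rw [box, Fintype.mem_piFinset]
  intro i
  rw [Finset.mem_Icc]
  rcases h with h | h
  · have := h i; omega
  · obtain ⟨-, q, hq, hd1⟩ := h
    obtain ⟨j, hj, hpm⟩ := dist1_struct hd1
    by_cases hij : i = j
    · subst hij; have := hq i; omega
    · rw [hj i hij]; have := hq i; omega

lemma adj_mem_nbr {d n : ℕ} {p q : V d} (h : Adj d n p q) : q ∈ nbr d n p :=
  Finset.mem_filter.mpr ⟨mem_box_of_Vset h.2.2.1, h⟩

lemma mem_nbr_adj {d n : ℕ} {p q : V d} (h : q ∈ nbr d n p) : Adj d n p q :=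
  (Finset.mem_filter.mp h).2

lemma Dset_not_Bset {d n : ℕ} {p : V d} (h : p ∈ Dset d n) : p ∉ Bset d n :=
  fun hb => hb.1 h

/-- An interior node at level `≥ t+2` cannot be adjacent from below to a node with a
coordinate equal to `n+1`. -/
lemma coordC {d n : ℕ} {p q : V d} {j : Fin d} (hp : p ∈ Dset d n)
    (h1 : dist1 p q = 1) (hqj : q j = (n : ℤ) + 1) (hs : sum1 p = sum1 q + 1) : False := by
  obtain ⟨k, hk, hpm⟩ := dist1_struct h1
  have hsk := sum1_of_struct hk
  have hpk : p k = q k + 1 := by omega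
  by_cases hjk : j = k
  · subst hjk; have := (hp j).2; omega
  · have := hk j hjk
    have := (hp j).2; omega

/-- Summing a function against the Laplacian row vector gives the Laplacian. -/
lemma lap_dot {d n : ℕ} (γ : V d → V d → ℝ) (hs : ∀ p q, γ p q = γ q p)
    {p : V d} (hp : p ∈ Dset d n) (u : V d → ℝ) :
    ∑ q ∈ box d n, u q * vrow d n γ p q = lap d n γ u p := by
  have hpbox : p ∈ box d n := mem_box_of_Vset (Or.inl hp)
  have step1 : ∀ q, u q * vrow d n γ p q =
      if Adj d n p q then u q * γ p q
      else if q = p then u p * (-(∑ r ∈ nbr d n p, γ p r)) else 0 := by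
    intro q
    rw [vrow]
    split_ifs with h1 h2
    · rfl
    · subst h2; rfl
    · exact mul_zero _
  calc ∑ q ∈ box d n, u q * vrow d n γ p q
      = ∑ q ∈ box d n, (if Adj d n p q then u q * γ p q
          else if q = p then u p * (-(∑ r ∈ nbr d n p, γ p r)) else 0) := by
        exact Finset.sum_congr rfl fun q _ => step1 q
    _ = ∑ q ∈ (box d n).filter (fun q => Adj d n p q), (if Adj d n p q then u q * γ p q
          else if q = p then u p * (-(∑ r ∈ nbr d n p, γ p r)) else 0)
        + ∑ q ∈ (box d n).filter (fun q => ¬ Adj d n p q), (if Adj d n p q then u q * γ p q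
          else if q = p then u p * (-(∑ r ∈ nbr d n p, γ p r)) else 0) :=
        (Finset.sum_filter_add_sum_filter_not _ _ _).symm
    _ = ∑ q ∈ nbr d n p, u q * γ p q
        + u p * (-(∑ r ∈ nbr d n p, γ p r)) := by
        congr 1
        · exact Finset.sum_congr rfl fun q hq => if_pos (Finset.mem_filter.mp hq).2
        · rw [Finset.sum_congr rfl (fun q hq => if_neg (Finset.mem_filter.mp hq).2),
            Finset.sum_ite_eq' _ p (fun _ => u p * (-(∑ r ∈ nbr d n p, γ p r)))]
          rw [if_pos (Finset.mem_filter.mpr ⟨hpbox, not_adj_self p⟩)]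
    _ = lap d n γ u p := by
        rw [lap]
        rw [show (∑ q ∈ nbr d n p, γ q p * (u q - u p))
            = ∑ q ∈ nbr d n p, (u q * γ p q - γ p q * u p) from
          Finset.sum_congr rfl fun q _ => by rw [hs q p]; ring]
        rw [Finset.sum_sub_distrib, ← Finset.sum_mul]
        ring

/-- Swapping the two arguments in a double sum over the edges of the graph. -/
lemma sum_nbr_swap {d n : ℕ} (F : V d → V d → ℝ) :
    ∑ p ∈ box d n, ∑ q ∈ nbr d n p, F p q = ∑ p ∈ box d n, ∑ q ∈ nbr d n p, F q p := by
  have key : ∀ G : V d → V d → ℝ,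
      ∑ p ∈ box d n, ∑ q ∈ nbr d n p, G p q
        = ∑ p ∈ box d n, ∑ q ∈ box d n, if Adj d n p q then G p q else 0 := by
    intro G
    exact Finset.sum_congr rfl fun p _ => (Finset.sum_filter _ _)
  rw [key F, key (fun a b => F b a)]
  rw [Finset.sum_comm]
  refine Finset.sum_congr rfl fun p _ => Finset.sum_congr rfl fun q _ => ?_
  by_cases h : Adj d n p q
  · rw [if_pos h, if_pos (adj_symm h)]
  · rw [if_neg h, if_neg (fun h' => h (adj_symm h'))]

/-- Unique continuation: a localized potential vanishes outside `L_t^S ∪ J_t^S`. -/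
lemma uc {d n : ℕ} {γ : V d → V d → ℝ} (hγ : GoodCond d n γ) {t : ℤ}
    (ht1 : (d : ℤ) - 1 ≤ t) {φ w : V d → ℝ}
    (hφ : ∀ p, p ∉ JS d n t → φ p = 0) (hsol : IsSol d n γ φ w)
    (hL : ∀ p ∈ L d n (t + 1), w p = 0) :
    ∀ p, p ∉ LS d n t ∪ JS d n t → w p = 0 := by
  classical
  obtain ⟨hout, hharm, hbdy⟩ := hsol
  set Dp : Set (V d) := {p | p ∈ Dset d n ∧ t + 2 ≤ sum1 p} with hDp
  set v : V d → ℝ := fun p => if p ∈ Dp then w p else 0 with hv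
  -- neighbours of Dp outside Dp carry zero potential
  have hZ : ∀ p q : V d, p ∈ Dp → Adj d n p q → q ∉ Dp → w q = 0 := by
    intro p q hp hadj hq
    rcases hadj.2.2.1 with hqD | hqB
    · -- interior: level exactly t+1
      have hs := adj_sum1 hadj
      have hp2 : t + 2 ≤ sum1 p := hp.2
      have : sum1 q = t + 1 := by
        have hq2 : ¬ (t + 2 ≤ sum1 q) := fun h => hq ⟨hqD, h⟩
        omega
      exact hL q ⟨hqD, this⟩
    · -- boundary: φ vanishes there
      rw [hbdy q hqB]
      refine hφ q ?_
      rintro (hKm | hKp)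
      · have hs := adj_sum1 hadj
        have h1 : sum1 q ≤ t := hKm.2.1
        have h2 : t + 2 ≤ sum1 p := hp.2
        omega
      · obtain ⟨-, hsle, j, hj⟩ := hKp
        have hs := adj_sum1 hadj
        have hp2 := hp.2
        have hseq : sum1 p = sum1 q + 1 := by omega
        exact coordC hp.1 hadj.1 hj hseq
  -- the energy sum
  set F : V d → V d → ℝ := fun p q => γ q p * ((v q - v p) * (w q - w p)) with hF
  have hU : ∑ p ∈ box d n, ∑ q ∈ nbr d n p, γ q p * (v p * (w q - w p)) = 0 := by
    refine Finset.sum_eq_zero fun p _ => ?_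
    by_cases hp : p ∈ Dp
    · have : v p = w p := if_pos hp
      have hl : lap d n γ w p = 0 := hharm p hp.1
      calc ∑ q ∈ nbr d n p, γ q p * (v p * (w q - w p))
          = v p * ∑ q ∈ nbr d n p, γ q p * (w q - w p) := by
            rw [Finset.mul_sum]; exact Finset.sum_congr rfl fun q _ => by ring
        _ = 0 := by rw [show ∑ q ∈ nbr d n p, γ q p * (w q - w p) = lap d n γ w p from rfl, hl,
            mul_zero]
    · have : v p = 0 := if_neg hp
      exact Finset.sum_eq_zero fun q _ => by rw [this]; ring
  have hT : ∑ p ∈ box d n, ∑ q ∈ nbr d n p, γ q p * (v q * (w q - w p)) = 0 := by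
    rw [sum_nbr_swap (fun p q => γ q p * (v q * (w q - w p)))]
    rw [show ∑ p ∈ box d n, ∑ q ∈ nbr d n p, γ p q * (v p * (w p - w q))
        = - ∑ p ∈ box d n, ∑ q ∈ nbr d n p, γ q p * (v p * (w q - w p)) by
      rw [← Finset.sum_neg_distrib]
      refine Finset.sum_congr rfl fun p _ => ?_
      rw [← Finset.sum_neg_distrib]
      refine Finset.sum_congr rfl fun q _ => ?_
      rw [hγ.1 p q]; ring]
    rw [hU]; ring
  have hsum : ∑ p ∈ box d n, ∑ q ∈ nbr d n p, F p q = 0 := by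
    have : ∀ p q : V d, F p q = γ q p * (v q * (w q - w p)) - γ q p * (v p * (w q - w p)) := by
      intro p q; simp only [hF]; ring
    calc ∑ p ∈ box d n, ∑ q ∈ nbr d n p, F p q
        = ∑ p ∈ box d n, ∑ q ∈ nbr d n p,
            (γ q p * (v q * (w q - w p)) - γ q p * (v p * (w q - w p))) :=
          Finset.sum_congr rfl fun p _ => Finset.sum_congr rfl fun q _ => this p q
      _ = (∑ p ∈ box d n, ∑ q ∈ nbr d n p, γ q p * (v q * (w q - w p)))
          - ∑ p ∈ box d n, ∑ q ∈ nbr d n p, γ q p * (v p * (w q - w p)) := by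
          rw [← Finset.sum_sub_distrib]
          exact Finset.sum_congr rfl fun p _ => Finset.sum_sub_distrib _ _
      _ = 0 := by rw [hT, hU]; ring
  have hnn : ∀ p ∈ box d n, ∀ q ∈ nbr d n p, 0 ≤ F p q := by
    intro p _ q hq
    have hadj := mem_nbr_adj hq
    have hγpos : 0 < γ q p := hγ.2 q p (adj_symm hadj)
    simp only [hF]
    by_cases hp : p ∈ Dp <;> by_cases hq' : q ∈ Dp
    · have e1 : v p = w p := if_pos hp
      have e2 : v q = w q := if_pos hq'
      rw [e1, e2]
      exact mul_nonneg hγpos.le (mul_self_nonneg _)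
    · have e1 : v p = w p := if_pos hp
      have e2 : v q = 0 := if_neg hq'
      have e3 : w q = 0 := hZ p q hp hadj hq'
      rw [e1, e2, e3]
      have : (0 - w p) * (0 - w p) = w p * w p := by ring
      rw [this]
      exact mul_nonneg hγpos.le (mul_self_nonneg _)
    · have e1 : v p = 0 := if_neg hp
      have e2 : v q = w q := if_pos hq'
      have e3 : w p = 0 := hZ q p hq' (adj_symm hadj) hp
      rw [e1, e2, e3]
      have : (w q - 0) * (w q - 0) = w q * w q := by ring
      rw [this]
      exact mul_nonneg hγpos.le (mul_self_nonneg _)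
    · have e1 : v p = 0 := if_neg hp
      have e2 : v q = 0 := if_neg hq'
      rw [e1, e2]
      simp
  have hzero : ∀ p ∈ box d n, ∀ q ∈ nbr d n p, F p q = 0 := by
    have houter : ∀ p ∈ box d n, ∑ q ∈ nbr d n p, F p q = 0 := by
      have := (Finset.sum_eq_zero_iff_of_nonneg
        (fun p hp => Finset.sum_nonneg fun q hq => hnn p hp q hq)).mp hsum
      exact this
    intro p hp
    exact fun q hq => (Finset.sum_eq_zero_iff_of_nonneg (fun q hq => hnn p hp q hq)).mp
      (houter p hp) q hq
  -- consequences on individual edges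
  have key : ∀ p ∈ Dp, ∀ q : V d, Adj d n p q →
      (q ∈ Dp → w q = w p) ∧ (q ∉ Dp → w p = 0) := by
    intro p hp q hadj
    have hpbox : p ∈ box d n := mem_box_of_Vset hadj.2.1
    have hqnbr : q ∈ nbr d n p := adj_mem_nbr hadj
    have hF0 := hzero p hpbox q hqnbr
    have hγpos : 0 < γ q p := hγ.2 q p (adj_symm hadj)
    simp only [hF] at hF0
    constructor
    · intro hq'
      have e1 : v p = w p := if_pos hp
      have e2 : v q = w q := if_pos hq'
      rw [e1, e2] at hF0
      have : (w q - w p) * (w q - w p) = 0 := by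
        rcases mul_eq_zero.mp hF0 with h | h
        · exact absurd h (ne_of_gt hγpos)
        · exact h
      have := mul_self_eq_zero.mp this
      linarith
    · intro hq'
      have e1 : v p = w p := if_pos hp
      have e2 : v q = 0 := if_neg hq'
      have e3 : w q = 0 := hZ p q hp hadj hq'
      rw [e1, e2, e3] at hF0
      have : (0 - w p) * (0 - w p) = w p * w p := by ring
      rw [this] at hF0
      rcases mul_eq_zero.mp hF0 with h | h
      · exact absurd h (ne_of_gt hγpos)
      · exact mul_self_eq_zero.mp h
  -- downward neighbour
  have down : ∀ p ∈ Dp, ∃ q : V d, Adj d n p q ∧ q ∈ Dset d n ∧ sum1 q = sum1 p - 1 := by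
    intro p hp
    have hpD := hp.1
    have hps := hp.2
    have hex : ∃ i : Fin d, 2 ≤ p i := by
      by_contra hcon
      push_neg at hcon
      have : sum1 p ≤ (d : ℤ) := by
        calc sum1 p ≤ ∑ _i : Fin d, (1 : ℤ) :=
              Finset.sum_le_sum fun i _ => by have := hcon i; omega
          _ = (d : ℤ) := by simp
      omega
    obtain ⟨i, hi⟩ := hex
    set q : V d := Function.update p i (p i - 1) with hq
    have hqi : q i = p i - 1 := Function.update_self i _ p
    have hqj : ∀ j, j ≠ i → q j = p j := fun j hj => Function.update_of_ne hj _ p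
    have hqD : q ∈ Dset d n := by
      intro j
      by_cases hj : j = i
      · subst hj; rw [hqi]; have := hpD j; omega
      · rw [hqj j hj]; exact hpD j
    have hd1 : dist1 p q = 1 := by
      rw [dist1, ← Finset.add_sum_erase univ (fun j => |p j - q j|) (mem_univ i)]
      rw [hqi]
      have h1 : |p i - (p i - 1)| = 1 := by
        rw [show p i - (p i - 1) = 1 by ring]; rfl
      rw [h1, Finset.sum_eq_zero fun j hj => by
        rw [hqj j (Finset.mem_erase.mp hj).1]; simp]
      ring
    have hsq : sum1 q = sum1 p - 1 := by
      have := sum1_of_struct (p := p) (q := q) (j := i) fun j hj => (hqj j hj).symm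
      omega
    exact ⟨q, ⟨hd1, Or.inl hpD, Or.inl hqD, Or.inl hpD⟩, hqD, hsq⟩
  -- induction up the levels
  have main : ∀ m : ℕ, ∀ p, p ∈ Dp → sum1 p ≤ t + 2 + m → w p = 0 := by
    intro m
    induction m with
    | zero =>
      intro p hp hle
      obtain ⟨q, hadj, hqD, hsq⟩ := down p hp
      have hq' : q ∉ Dp := by
        intro hq'
        have := hq'.2; have := hp.2; omega
      exact (key p hp q hadj).2 hq'
    | succ m ih =>
      intro p hp hle
      obtain ⟨q, hadj, hqD, hsq⟩ := down p hp
      by_cases hq' : q ∈ Dp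
      · have h1 := (key p hp q hadj).1 hq'
        have h2 := ih q hq' (by omega)
        exact h1 ▸ h2
      · exact (key p hp q hadj).2 hq'
  -- conclusion
  intro p hp
  rw [Set.mem_union] at hp
  push_neg at hp
  obtain ⟨hp1, hp2⟩ := hp
  by_cases hpV : p ∈ Vset d n
  · rcases hpV with hpD | hpB
    · have hsgt : t < sum1 p := by
        by_contra hcon
        exact hp1 ⟨hpD, by omega⟩
      by_cases hcase : sum1 p = t + 1
      · exact hL p ⟨hpD, hcase⟩
      · have hpDp : p ∈ Dp := ⟨hpD, by omega⟩
        exact main (sum1 p - (t + 2)).toNat p hpDp (by omega)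
    · rw [hbdy p hpB]; exact hφ p hp2
  · exact hout p hpV

/-- the orthogonal direct-sum decomposition
`𝒰^{(t)} ⊕ span{ v_p|_{L_t^S ∪ J_t^S} : p ∈ L_{t+1}^S } = ℝ^{L_t^S ∪ J_t^S}`. -/
theorem stmt6 (d n : ℕ) (hd : 2 ≤ d) (hn : 1 ≤ n)
    (γ : V d → V d → ℝ) (hγ : GoodCond d n γ)
    (t : ℤ) (ht1 : (d : ℤ) - 1 ≤ t) (ht2 : t ≤ (d : ℤ) * n - 1) :
    (∀ u ∈ Uset d n γ t,
      ∀ z ∈ Submodule.span ℝ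
        ((fun p => rst (LS d n t ∪ JS d n t) (vrow d n γ p)) '' LS d n (t + 1)),
      dot d n u z = 0) ∧
    (∀ x : V d → ℝ, (∀ p, p ∉ LS d n t ∪ JS d n t → x p = 0) →
      ∃ u ∈ Uset d n γ t,
        ∃ z ∈ Submodule.span ℝ
          ((fun p => rst (LS d n t ∪ JS d n t) (vrow d n γ p)) '' LS d n (t + 1)),
        x = u + z) := by
  classical
  constructor
  · -- Part 1: orthogonality
    intro u hu z hz
    obtain ⟨hsupp, φ, w, hφ, hsol, hLz, huw⟩ := hu
    have hw0 : ∀ p, p ∉ LS d n t ∪ JS d n t → w p = 0 := uc hγ ht1 hφ hsol hLz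
    have hgen : ∀ g ∈ (fun p => rst (LS d n t ∪ JS d n t) (vrow d n γ p)) '' LS d n (t + 1),
        dot d n u g = 0 := by
      rintro g ⟨p', hp', rfl⟩
      have h1 : dot d n u (rst (LS d n t ∪ JS d n t) (vrow d n γ p'))
          = ∑ q ∈ box d n, w q * vrow d n γ p' q := by
        simp only [dot]
        refine Finset.sum_congr rfl fun q _ => ?_
        by_cases hqS : q ∈ LS d n t ∪ JS d n t
        · simp only [rst, if_pos hqS, huw q hqS]
        · simp only [rst, if_neg hqS, hsupp q hqS, hw0 q hqS]; ring
      rw [h1, lap_dot γ hγ.1 hp'.1 w]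
      exact hsol.2.1 p' hp'.1
    refine Submodule.span_induction (p := fun z _ => dot d n u z = 0) hgen ?_ ?_ ?_ hz
    · simp [dot]
    · intro a b _ _ ha hb
      have : dot d n u (a + b) = dot d n u a + dot d n u b := by
        simp only [dot, Pi.add_apply, mul_add]
        exact Finset.sum_add_distrib
      rw [this, ha, hb, add_zero]
    · intro c a _ ha
      have : dot d n u (c • a) = c * dot d n u a := by
        simp only [dot, Pi.smul_apply, smul_eq_mul, Finset.mul_sum]
        exact Finset.sum_congr rfl fun q _ => by ring
      rw [this, ha, mul_zero]
  · -- Part 2: decomposition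
    intro x hx
    set S : Set (V d) := LS d n t ∪ JS d n t with hS
    set gens : Set (V d → ℝ) := (fun p => rst S (vrow d n γ p)) '' LS d n (t + 1) with hgens
    let ι : (V d → ℝ) →ₗ[ℝ] EuclideanSpace ℝ ↥(box d n) :=
      { toFun := fun f => WithLp.toLp 2 (fun q => f q)
        map_add' := fun f g => rfl
        map_smul' := fun c f => rfl }
    have hι : ∀ (f : V d → ℝ) (q : ↥(box d n)), ι f q = f q := fun f q => rfl
    have hdot : ∀ f g : V d → ℝ, dot d n f g = (inner ℝ (ι f) (ι g) : ℝ) := by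
      intro f g
      have h2 : (inner ℝ (ι f) (ι g) : ℝ) = ∑ q : ↥(box d n), f q * g q := by
        rw [PiLp.inner_apply]
        simp only [RCLike.inner_apply, conj_trivial, hι, mul_comm]
      rw [h2, Finset.sum_coe_sort (box d n) (fun p => f p * g p)]
      rfl
    set W : Submodule ℝ (V d → ℝ) := Submodule.span ℝ gens with hW
    set W' : Submodule ℝ (EuclideanSpace ℝ ↥(box d n)) := W.map ι with hW'
    haveI : FiniteDimensional ℝ (EuclideanSpace ℝ ↥(box d n)) := by infer_instance
    haveI : FiniteDimensional ℝ ↥W' := FiniteDimensional.finiteDimensional_submodule W'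
    haveI : CompleteSpace ↥W' := FiniteDimensional.complete ℝ ↥W'
    haveI : Submodule.HasOrthogonalProjection W' := Submodule.HasOrthogonalProjection.ofCompleteSpace W'
    obtain ⟨y, hy, z', hz', hxyz⟩ := W'.exists_add_mem_mem_orthogonal (ι x)
    obtain ⟨z, hzW, hzy⟩ := Submodule.mem_map.mp hy
    set u : V d → ℝ := x - z with hu
    have hz0 : ∀ p, p ∉ S → z p = 0 := by
      refine Submodule.span_induction (p := fun f _ => ∀ p, p ∉ S → f p = 0) ?_ ?_ ?_ ?_ hzW
      · rintro f ⟨p', hp', rfl⟩ p hp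
        simp only [rst, if_neg hp]
      · intro p _; rfl
      · intro a b _ _ ha hb p hp
        simp [Pi.add_apply, ha p hp, hb p hp]
      · intro c a _ ha p hp
        simp [Pi.smul_apply, ha p hp]
    have hu0 : ∀ p, p ∉ S → u p = 0 := fun p hp => by
      simp only [hu, Pi.sub_apply, hx p hp, hz0 p hp, sub_zero]
    have horth : ∀ p' ∈ LS d n (t + 1), dot d n u (rst S (vrow d n γ p')) = 0 := by
      intro p' hp'
      have hg : rst S (vrow d n γ p') ∈ gens := ⟨p', hp', rfl⟩
      have hgW' : ι (rst S (vrow d n γ p')) ∈ W' :=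
        Submodule.mem_map_of_mem (Submodule.subset_span hg)
      have hιu : ι u = z' := by
        rw [hu, map_sub, hxyz, hzy]
        abel
      rw [hdot, hιu, real_inner_comm]
      exact (Submodule.mem_orthogonal _ _).mp hz' _ hgW'
    have hlap : ∀ p ∈ Dset d n, lap d n γ u p = 0 := by
      intro p hp
      by_cases hcase : sum1 p ≤ t + 1
      · have hp' : p ∈ LS d n (t + 1) := ⟨hp, hcase⟩
        have h1 : ∑ q ∈ box d n, u q * vrow d n γ p q
            = dot d n u (rst S (vrow d n γ p)) := by
          simp only [dot]
          refine Finset.sum_congr rfl fun q _ => ?_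
          by_cases hqS : q ∈ S
          · simp only [rst, if_pos hqS]
          · rw [hu0 q hqS]; simp only [rst, if_neg hqS]; ring
        rw [← lap_dot γ hγ.1 hp u, h1, horth p hp']
      · push_neg at hcase
        rw [lap]
        refine Finset.sum_eq_zero fun q hq => ?_
        have hadj := mem_nbr_adj hq
        have hs := adj_sum1 hadj
        have hpS : p ∉ S := by
          rintro (h | h)
          · have := h.2; omega
          · rcases h with h | h
            · exact Dset_not_Bset hp h.1
            · exact Dset_not_Bset hp h.1
        have hqS : q ∉ S := by
          rintro (h | h)
          · have := h.2; omega
          · rcases h with h | h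
            · have := h.2.1; omega
            · obtain ⟨hqB, hqle, j, hj⟩ := h
              have hseq : sum1 p = sum1 q + 1 := by omega
              exact coordC hp hadj.1 hj hseq
        rw [hu0 p hpS, hu0 q hqS]; ring
    refine ⟨u, ⟨hu0, (fun p => if p ∈ JS d n t then u p else 0), u, ?_, ⟨?_, hlap, ?_⟩, ?_,
      fun p _ => rfl⟩, z, hzW, ?_⟩
    · exact fun p hp => if_neg hp
    · intro p hpV
      refine hu0 p fun hpS => hpV ?_
      rcases hpS with h | h
      · exact Or.inl h.1
      · rcases h with h | h
        · exact Or.inr h.1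
        · exact Or.inr h.1
    · intro p hpB
      by_cases hpJ : p ∈ JS d n t
      · exact (if_pos hpJ).symm
      · have h0 : u p = 0 := hu0 p (by rintro (h | h); exacts [Dset_not_Bset h.1 hpB, hpJ h])
        rw [h0]; exact (if_neg hpJ).symm
    · intro p hpL
      refine hu0 p ?_
      rintro (h | h)
      · have := h.2; have := hpL.2; omega
      · rcases h with h | h
        · exact Dset_not_Bset hpL.1 h.1
        · exact Dset_not_Bset hpL.1 h.1
    · rw [hu]; abel

end DiscreteCalderon
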